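/- (Corollary: average pairwise loss over fading is at most 1.25 dB.) Let N ≥ 1, let x ≠ x̂ : Fin N → Fin 4, and let ν be a probability measure on (Fin N → ℝ) (the law of the fading coefficients H) such that for ν-almost every h one has β_h > 0, where α_h = Σ_{k : (x k, x̂ k) ∈ {(0,3),(3,0)}} (h k)² and β_h = Σ_k (h k)² · b(x k, x̂ k). Then for every t > 0: ∫ Q( t · (β_h + 2α_h)/√β_h ) dν(h) ≤ ∫ Q( t · (√3/2) · √(β_h + 8α_h) ) dν(h); i.e., the average pairwise error probability of the bit-wise decoder at SNR parameter t is at most that of the symbol-wise decoder at SNR parameter reduced by the factor √3/2 (a 1.25 dB penalty). -/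
import Mathlib


open Finset

noncomputable section

/-- Pairwise weight of a pair of 4-PAM symbols: `1` if `|i−j| ∈ {1,3}`,
`4` if `|i−j| = 2`, `0` if `i = j`. -/
def pw (i j : Fin 4) : ℝ :=
  if i = j then 0 else if ((i : ℤ) - (j : ℤ)).natAbs = 2 then 4 else 1

open MeasureTheory ProbabilityTheory

/-- The standard Gaussian tail function `Q`. -/
def Q (u : ℝ) : ℝ := ((gaussianReal 0 1) (Set.Ici u)).toReal

lemma Q_anti : Antitone Q := by
  intro u v huv
  exact ENNReal.toReal_mono (measure_ne_top _ _)
    (measure_mono (Set.Ici_subset_Ici.mpr huv))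

lemma Q_meas : Measurable Q := Q_anti.measurable

lemma Q_nonneg (u : ℝ) : 0 ≤ Q u := ENNReal.toReal_nonneg

lemma Q_le_one (u : ℝ) : Q u ≤ 1 := by
  have := prob_le_one (μ := gaussianReal 0 1) (s := Set.Ici u)
  simpa [Q] using ENNReal.toReal_mono (by norm_num) this

lemma pw_nonneg (i j : Fin 4) : 0 ≤ pw i j := by
  unfold pw; split_ifs <;> norm_num

/-- **Corollary: average pairwise loss over fading ≤ 1.25 dB.**
If the fading law `ν` gives `β_h > 0` almost surely, then for every SNR
parameter `t > 0` the average pairwise error probability of the bit-wise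
decoder is at most that of the symbol-wise decoder with SNR reduced by the
factor `√3/2` (a 1.25 dB penalty). -/
theorem average_pep_loss_le (N : ℕ) (hN : 1 ≤ N)
    (x xh : Fin N → Fin 4) (hne : x ≠ xh)
    (ν : Measure (Fin N → ℝ)) [IsProbabilityMeasure ν]
    (α β : (Fin N → ℝ) → ℝ)
    (hα : ∀ h, α h = ∑ k ∈ Finset.univ.filter (fun k =>
      (x k, xh k) = ((0 : Fin 4), (3 : Fin 4))
        ∨ (x k, xh k) = ((3 : Fin 4), (0 : Fin 4))), (h k) ^ 2)
    (hβ : ∀ h, β h = ∑ k, (h k) ^ 2 * pw (x k) (xh k))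
    (hae : ∀ᵐ h ∂ν, 0 < β h) (t : ℝ) (ht : 0 < t) :
    ∫ h, Q (t * ((β h + 2 * α h) / Real.sqrt (β h))) ∂ν
      ≤ ∫ h, Q (t * (Real.sqrt 3 / 2) * Real.sqrt (β h + 8 * α h)) ∂ν := by
  have hαe : α = fun h => ∑ k ∈ Finset.univ.filter (fun k =>
      (x k, xh k) = ((0 : Fin 4), (3 : Fin 4))
        ∨ (x k, xh k) = ((3 : Fin 4), (0 : Fin 4))), (h k) ^ 2 := funext hα
  have hβe : β = fun h => ∑ k, (h k) ^ 2 * pw (x k) (xh k) := funext hβ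
  have hαm : Measurable α := by
    rw [hαe]
    exact Finset.measurable_sum _ fun k _ => (measurable_pi_apply k).pow_const 2
  have hβm : Measurable β := by
    rw [hβe]
    exact Finset.measurable_sum _ fun k _ =>
      ((measurable_pi_apply k).pow_const 2).mul_const _
  have hα0 : ∀ h, 0 ≤ α h := fun h => by
    rw [hα]; exact Finset.sum_nonneg fun k _ => sq_nonneg _
  have hβ0 : ∀ h, 0 ≤ β h := fun h => by
    rw [hβ]; exact Finset.sum_nonneg fun k _ => mul_nonneg (sq_nonneg _) (pw_nonneg _ _)
  -- measurability of both integrands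
  have hm1 : Measurable fun h => Q (t * ((β h + 2 * α h) / Real.sqrt (β h))) :=
    Q_meas.comp (measurable_const.mul
      ((hβm.add (hαm.const_mul 2)).div hβm.sqrt))
  have hm2 : Measurable fun h => Q (t * (Real.sqrt 3 / 2) * Real.sqrt (β h + 8 * α h)) :=
    Q_meas.comp (measurable_const.mul (hβm.add (hαm.const_mul 8)).sqrt)
  have hint : ∀ (f : (Fin N → ℝ) → ℝ), Measurable f → (∀ h, f h = Q (f h)) →
      True := fun _ _ _ => trivial
  have hi1 : Integrable (fun h => Q (t * ((β h + 2 * α h) / Real.sqrt (β h)))) ν := by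
    refine (integrable_const (1 : ℝ)).mono' hm1.aestronglyMeasurable ?_
    filter_upwards with h
    rw [Real.norm_of_nonneg (Q_nonneg _)]
    exact Q_le_one _
  have hi2 : Integrable (fun h => Q (t * (Real.sqrt 3 / 2) * Real.sqrt (β h + 8 * α h))) ν := by
    refine (integrable_const (1 : ℝ)).mono' hm2.aestronglyMeasurable ?_
    filter_upwards with h
    rw [Real.norm_of_nonneg (Q_nonneg _)]
    exact Q_le_one _
  refine integral_mono_ae hi1 hi2 ?_
  filter_upwards [hae] with h hb
  apply Q_anti
  set a := α h with ha'
  set b := β h with hb'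
  have ha0 : 0 ≤ a := hα0 h
  have hsb : 0 < Real.sqrt b := Real.sqrt_pos.mpr hb
  have key : Real.sqrt 3 / 2 * Real.sqrt (b + 8 * a) ≤ (b + 2 * a) / Real.sqrt b := by
    rw [div_mul_eq_mul_div, ← Real.sqrt_mul (by norm_num : (0:ℝ) ≤ 3),
      div_le_div_iff₀ (by norm_num) hsb,
      ← Real.sqrt_mul (by positivity) b,
      show (b + 2 * a) * 2 = Real.sqrt (((b + 2 * a) * 2) ^ 2) from
        (Real.sqrt_sq (by positivity)).symm]
    apply Real.sqrt_le_sqrt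
    nlinarith [sq_nonneg (b - 4 * a), hb, ha0]
  calc t * (Real.sqrt 3 / 2) * Real.sqrt (b + 8 * a)
      = t * (Real.sqrt 3 / 2 * Real.sqrt (b + 8 * a)) := by ring
    _ ≤ t * ((b + 2 * a) / Real.sqrt b) := by
        exact mul_le_mul_of_nonneg_left key ht.le

end
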